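/- Suppose there exists a Slater point x̃ ∈ X with A x̃ = b and -g(x̃) ∈ int(K). Then the quantity r* := inf{ ⟨w, -g(x̃)⟩ : w ∈ K*, ‖w‖ = 1 } is attained and satisfies r* > 0, and every dual optimal solution (v*, λ*) satisfies ‖λ*‖ ≤ (f(x̃) - q(v,λ)) / r* for every (v,λ) ∈ dom q. -/
import Mathlib


open scoped RealInnerProductSpace

/-- For the nonlinear conic program
`min { f x : x ∈ X, A x = b, g x ∈ -K }` (with `X` nonempty compact convex, `K` a proper
cone, `f` convex continuous, `g` continuous and `K`-convex on `X`), if there is a Slater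
point `x̃ ∈ X` with `A x̃ = b` and `-g x̃ ∈ int K`, then
`r* = inf { ⟨w, -g x̃⟩ : w ∈ K*, ‖w‖ = 1 }` is attained and positive, and every dual
optimal solution `(v*, λ*)` satisfies `‖λ*‖ ≤ (f x̃ - q(v,λ)) / r*` for every
`(v,λ) ∈ dom q`, where `q` is the dual function. -/
theorem stmt_0 {n m p : ℕ} (hm : 1 ≤ m)
    (X : Set (EuclideanSpace ℝ (Fin n)))
    (K : Set (EuclideanSpace ℝ (Fin m)))
    (A : Matrix (Fin p) (Fin n) ℝ) (b : EuclideanSpace ℝ (Fin p))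
    (f : EuclideanSpace ℝ (Fin n) → ℝ)
    (g : EuclideanSpace ℝ (Fin n) → EuclideanSpace ℝ (Fin m))
    (hXne : X.Nonempty) (hXcpt : IsCompact X) (hXconv : Convex ℝ X)
    (hKclosed : IsClosed K) (hKconv : Convex ℝ K)
    (hKcone : ∀ c : ℝ, 0 ≤ c → ∀ u ∈ K, c • u ∈ K)
    (hKpointed : ∀ u ∈ K, -u ∈ K → u = 0)
    (hKint : (interior K).Nonempty)
    (hfconv : ConvexOn ℝ Set.univ f) (hfcont : Continuous f)
    (hgcont : Continuous g)
    (hgKconv : ∀ x ∈ X, ∀ x' ∈ X, ∀ t : ℝ, 0 ≤ t → t ≤ 1 →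
      t • g x + (1 - t) • g x' - g (t • x + (1 - t) • x') ∈ K)
    (Kstar : Set (EuclideanSpace ℝ (Fin m)))
    (hKstar : Kstar = {w | ∀ u ∈ K, 0 ≤ ⟪w, u⟫})
    (Φ : EuclideanSpace ℝ (Fin n) → EuclideanSpace ℝ (Fin p) × EuclideanSpace ℝ (Fin m) → ℝ)
    (hΦ : ∀ x v lam, Φ x (v, lam) =
      f x + ⟪v, Matrix.toEuclideanLin A x - b⟫ + ⟪lam, g x⟫)
    (q : EuclideanSpace ℝ (Fin p) → EuclideanSpace ℝ (Fin m) → ℝ)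
    (hq : ∀ v lam, lam ∈ Kstar → q v lam = sInf ((fun x => Φ x (v, lam)) '' X))
    -- Slater point
    (xt : EuclideanSpace ℝ (Fin n)) (hxtX : xt ∈ X)
    (hxtA : Matrix.toEuclideanLin A xt = b) (hxtg : -g xt ∈ interior K)
    (rstar : ℝ)
    (hrstar : rstar = sInf {r : ℝ | ∃ w ∈ Kstar, ‖w‖ = 1 ∧ r = ⟪w, -g xt⟫}) :
    (∃ w ∈ Kstar, ‖w‖ = 1 ∧ ⟪w, -g xt⟫ = rstar) ∧ 0 < rstar ∧
      ∀ vstar lamstar, lamstar ∈ Kstar →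
        (∀ v lam, lam ∈ Kstar → q v lam ≤ q vstar lamstar) →
        ∀ v lam, lam ∈ Kstar → BddBelow ((fun x => Φ x (v, lam)) '' X) →
          ‖lamstar‖ ≤ (f xt - q v lam) / rstar := by
  classical
  set S : Set ℝ := {r : ℝ | ∃ w ∈ Kstar, ‖w‖ = 1 ∧ r = ⟪w, -g xt⟫} with hS
  -- ball around -g xt inside K
  obtain ⟨ε, hε, hball⟩ := Metric.isOpen_iff.mp isOpen_interior (-g xt) hxtg
  have hballK : Metric.ball (-g xt) ε ⊆ K := hball.trans interior_subset
  -- 0 ∈ K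
  obtain ⟨u₀, hu₀⟩ := hKint
  have h0K : (0 : EuclideanSpace ℝ (Fin m)) ∈ K := by
    have := hKcone 0 le_rfl u₀ (interior_subset hu₀)
    simpa using this
  -- lower bound on S
  have hSlb : ∀ r ∈ S, ε / 2 ≤ r := by
    rintro r ⟨w, hw, hwn, rfl⟩
    have hmem : -g xt - (ε / 2) • w ∈ K := by
      apply hballK
      rw [Metric.mem_ball, dist_eq_norm]
      have : -g xt - (ε / 2) • w - -g xt = -((ε / 2) • w) := by abel
      rw [this, norm_neg, norm_smul, hwn]
      simp only [mul_one, Real.norm_eq_abs, abs_of_pos (half_pos hε)]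
      linarith
    have h1 := (hKstar ▸ hw) _ hmem
    rw [inner_sub_right, real_inner_smul_right, real_inner_self_eq_norm_sq, hwn] at h1
    nlinarith
  -- Kstar contains a unit vector
  have hKne_univ : K ≠ Set.univ := by
    intro hKuniv
    set u : EuclideanSpace ℝ (Fin m) := EuclideanSpace.single ⟨0, hm⟩ (1 : ℝ) with hu
    have h1 := hKpointed u (hKuniv ▸ Set.mem_univ u) (hKuniv ▸ Set.mem_univ (-u))
    have : ‖u‖ = 1 := by simp [hu]
    rw [h1] at this
    simp at this
  obtain ⟨z, hz⟩ : ∃ z, z ∉ K := by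
    by_contra h
    push_neg at h
    exact hKne_univ (Set.eq_univ_of_forall h)
  obtain ⟨φ, u, hφK, hφz⟩ := geometric_hahn_banach_closed_point hKconv hKclosed hz
  have hu_pos : 0 < u := by have := hφK 0 h0K; simpa using this
  have hφnonpos : ∀ a ∈ K, φ a ≤ 0 := by
    intro a ha
    by_contra hpos
    push_neg at hpos
    have ht : (0:ℝ) ≤ (u + 1) / φ a := by positivity
    have := hφK _ (hKcone _ ht a ha)
    rw [map_smul] at this
    have : (u + 1) / φ a * φ a = u + 1 := div_mul_cancel₀ _ (ne_of_gt hpos)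
    have h2 := hφK _ (hKcone _ ht a ha)
    rw [map_smul, smul_eq_mul, this] at h2
    linarith
  set w₀ : EuclideanSpace ℝ (Fin m) := -(InnerProductSpace.toDual ℝ _).symm φ with hw₀
  have hw₀inner : ∀ x, ⟪w₀, x⟫ = -φ x := by
    intro x
    rw [hw₀, inner_neg_left, InnerProductSpace.toDual_symm_apply]
  have hw₀ne : w₀ ≠ 0 := by
    intro h
    have := hw₀inner z
    rw [h, inner_zero_left] at this
    have : φ z = 0 := by linarith [this.symm]
    linarith [hφz]
  have hw₀norm : 0 < ‖w₀‖ := norm_pos_iff.mpr hw₀ne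
  set w₁ : EuclideanSpace ℝ (Fin m) := ‖w₀‖⁻¹ • w₀ with hw₁
  have hw₁norm : ‖w₁‖ = 1 := by
    rw [hw₁, norm_smul, norm_inv, norm_norm, inv_mul_cancel₀ (ne_of_gt hw₀norm)]
  have hw₁K : w₁ ∈ Kstar := by
    rw [hKstar]
    intro a ha
    rw [hw₁, real_inner_smul_left, hw₀inner]
    have := hφnonpos a ha
    have h2 : (0:ℝ) ≤ ‖w₀‖⁻¹ := by positivity
    nlinarith
  -- compact set of unit vectors in Kstar
  have hKstarClosed : IsClosed Kstar := by
    rw [hKstar]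
    have : {w : EuclideanSpace ℝ (Fin m) | ∀ u ∈ K, 0 ≤ ⟪w, u⟫} =
        ⋂ u ∈ K, {w | 0 ≤ ⟪w, u⟫} := by
      ext w; simp
    rw [this]
    exact isClosed_biInter fun u _ =>
      isClosed_le continuous_const (Continuous.inner continuous_id continuous_const)
  set T : Set (EuclideanSpace ℝ (Fin m)) := Kstar ∩ Metric.sphere 0 1 with hT
  have hTcpt : IsCompact T := (isCompact_sphere (0 : EuclideanSpace ℝ (Fin m)) 1).inter_left hKstarClosed
  have hTne : T.Nonempty := ⟨w₁, hw₁K, by simpa [mem_sphere_zero_iff_norm] using hw₁norm⟩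
  have hcont : Continuous fun w : EuclideanSpace ℝ (Fin m) => ⟪w, -g xt⟫ :=
    Continuous.inner continuous_id continuous_const
  obtain ⟨wstar, hwstarT, hwstarmin⟩ := hTcpt.exists_isMinOn hTne hcont.continuousOn
  have hSeq : S = (fun w => ⟪w, -g xt⟫) '' T := by
    ext r
    constructor
    · rintro ⟨w, hw, hwn, rfl⟩
      exact ⟨w, ⟨hw, mem_sphere_zero_iff_norm.mpr hwn⟩, rfl⟩
    · rintro ⟨w, ⟨hw, hwn⟩, rfl⟩
      exact ⟨w, hw, mem_sphere_zero_iff_norm.mp hwn, rfl⟩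
  have hSne : S.Nonempty := ⟨⟪w₁, -g xt⟫, w₁, hw₁K, hw₁norm, rfl⟩
  have hSbdd : BddBelow S := ⟨ε / 2, hSlb⟩
  have hwstar_mem : ⟪wstar, -g xt⟫ ∈ S := by
    rw [hSeq]; exact ⟨wstar, hwstarT, rfl⟩
  have hrstar_eq : rstar = ⟪wstar, -g xt⟫ := by
    rw [hrstar]
    apply le_antisymm (csInf_le hSbdd hwstar_mem)
    apply le_csInf hSne
    rintro r ⟨w, hw, hwn, rfl⟩
    exact hwstarmin ⟨hw, mem_sphere_zero_iff_norm.mpr hwn⟩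
  have hrstar_pos : 0 < rstar := lt_of_lt_of_le (half_pos hε) (hrstar ▸ le_csInf hSne hSlb)
  refine ⟨⟨wstar, hwstarT.1, mem_sphere_zero_iff_norm.mp hwstarT.2, hrstar_eq.symm⟩, hrstar_pos, ?_⟩
  intro vstar lamstar hlamstar hopt v lam hlam _
  -- continuity of Φ · (v', λ')
  have hΦcont : ∀ (v' : EuclideanSpace ℝ (Fin p)) (lam' : EuclideanSpace ℝ (Fin m)),
      Continuous fun x => Φ x (v', lam') := by
    intro v' lam'
    have : (fun x => Φ x (v', lam')) =
        fun x => f x + ⟪v', Matrix.toEuclideanLin A x - b⟫ + ⟪lam', g x⟫ := by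
      funext x; exact hΦ x v' lam'
    rw [this]
    have hA : Continuous fun x : EuclideanSpace ℝ (Fin n) => Matrix.toEuclideanLin A x :=
      (Matrix.toEuclideanLin A).continuous_of_finiteDimensional
    exact (hfcont.add (Continuous.inner continuous_const (hA.sub continuous_const))).add
      (Continuous.inner continuous_const hgcont)
  -- q vstar lamstar ≤ Φ xt (vstar, lamstar)
  have hbdd : ∀ (v' : EuclideanSpace ℝ (Fin p)) (lam' : EuclideanSpace ℝ (Fin m)),
      BddBelow ((fun x => Φ x (v', lam')) '' X) := fun v' lam' =>
    (hXcpt.image (hΦcont v' lam')).bddBelow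
  have hqle : q vstar lamstar ≤ Φ xt (vstar, lamstar) := by
    rw [hq vstar lamstar hlamstar]
    exact csInf_le (hbdd vstar lamstar) ⟨xt, hxtX, rfl⟩
  have hΦxt : Φ xt (vstar, lamstar) = f xt - ⟪lamstar, -g xt⟫ := by
    rw [hΦ, hxtA, sub_self, inner_zero_right, inner_neg_right]
    ring
  -- key: rstar * ‖lamstar‖ ≤ ⟪lamstar, -g xt⟫
  have hkey : rstar * ‖lamstar‖ ≤ ⟪lamstar, -g xt⟫ := by
    rcases eq_or_ne lamstar 0 with h | h
    · simp [h]
    · have hln : 0 < ‖lamstar‖ := norm_pos_iff.mpr h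
      have hmem : ⟪‖lamstar‖⁻¹ • lamstar, -g xt⟫ ∈ S := by
        refine ⟨‖lamstar‖⁻¹ • lamstar, ?_, ?_, rfl⟩
        · rw [hKstar]
          intro a ha
          rw [real_inner_smul_left]
          have := (hKstar ▸ hlamstar) a ha
          positivity
        · rw [norm_smul, norm_inv, norm_norm, inv_mul_cancel₀ (ne_of_gt hln)]
      have h2 : rstar ≤ ⟪‖lamstar‖⁻¹ • lamstar, -g xt⟫ := hrstar ▸ csInf_le hSbdd hmem
      rw [real_inner_smul_left] at h2
      calc rstar * ‖lamstar‖ ≤ ‖lamstar‖⁻¹ * ⟪lamstar, -g xt⟫ * ‖lamstar‖ := by nlinarith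
        _ = ⟪lamstar, -g xt⟫ := by field_simp
  have hchain : q v lam ≤ f xt - rstar * ‖lamstar‖ := by
    have := hopt v lam hlam
    linarith [hqle, hΦxt ▸ hqle]
  rw [le_div_iff₀ hrstar_pos]
  have := hopt v lam hlam
  nlinarith [hqle, hΦxt ▸ hqle, hkey]
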